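/- arXiv:1210.5392 — 2 statements merged into one kernel-verified Lean document; each statement's English description precedes it below -/
import Mathlib

section
/- Let ψ(x) = (1 + x²)^{s/2} with s ∈ ℕ and σ > 0. For bounded continuous f : [0,∞) → ℂ and t ≥ 0, define P_t f(x) := ∫_ℝ f((√x + σ√t y)²) (2π)^{-1/2} e^{−y²/2} dy. Then (P_t)_{t≥0} satisfies the semigroup property P_{t+s} = P_t P_s on bounded continuous functions. -/
open MeasureTheory Real

noncomputable def gaussDensity (y : ℝ) : ℝ :=
  (Real.sqrt (2 * Real.pi))⁻¹ * Real.exp (-(y ^ 2) / 2)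

noncomputable def cirSemigroup (σ : ℝ) (t : ℝ) (f : ℝ → ℂ) (x : ℝ) : ℂ :=
  ∫ y : ℝ, gaussDensity y • f ((Real.sqrt x + σ * Real.sqrt t * y) ^ 2)

lemma gaussDensity_nonneg (y : ℝ) : 0 ≤ gaussDensity y := by
  unfold gaussDensity; positivity

lemma gaussDensity_continuous : Continuous gaussDensity := by
  unfold gaussDensity
  fun_prop

lemma gaussDensity_neg (y : ℝ) : gaussDensity (-y) = gaussDensity y := by
  simp [gaussDensity]

lemma gaussDensity_integrable : Integrable gaussDensity := by
  have h : gaussDensity = fun y => (Real.sqrt (2 * Real.pi))⁻¹ * Real.exp (-(2⁻¹ : ℝ) * y ^ 2) := by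
    funext y; unfold gaussDensity; ring_nf
  rw [h]
  exact (integrable_exp_neg_mul_sq (by norm_num)).const_mul _

lemma gaussDensity_integral : ∫ y, gaussDensity y = 1 := by
  have h : ∀ y : ℝ, gaussDensity y = (Real.sqrt (2 * Real.pi))⁻¹ * Real.exp (-(2⁻¹ : ℝ) * y ^ 2) := by
    intro y; unfold gaussDensity; ring_nf
  simp_rw [h]
  rw [integral_const_mul, integral_gaussian]
  rw [show (π / 2⁻¹ : ℝ) = 2 * π by ring]
  rw [inv_mul_cancel₀ (by positivity : Real.sqrt (2 * π) ≠ 0)]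

/-- Gaussian integral with a shift. -/
lemma integral_gauss_shift (p m : ℝ) :
    ∫ y : ℝ, Real.exp (-(p * (y - m) ^ 2)) = Real.sqrt (π / p) := by
  have h := MeasureTheory.integral_add_right_eq_self (μ := volume)
    (fun y : ℝ => Real.exp (-(p * y ^ 2))) (-m)
  simp only [← sub_eq_add_neg] at h
  rw [h]
  simp_rw [neg_mul_eq_neg_mul]
  exact integral_gaussian p

/-- Linear substitution: `∫ G(z) • F(d + c z) dz = ∫ c⁻¹ G((u-d)/c) • F(u) du`. -/
lemma integral_gauss_sub {c : ℝ} (hc : 0 < c) (d : ℝ) (F : ℝ → ℂ) :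
    ∫ z : ℝ, gaussDensity z • F (d + c * z)
      = ∫ u : ℝ, (c⁻¹ * gaussDensity ((u - d) / c)) • F u := by
  set Φ : ℝ → ℂ := fun u => (c⁻¹ * gaussDensity ((u - d) / c)) • F u with hΦ
  have h1 : ∫ z : ℝ, Φ (d + c * z) = |c⁻¹| • ∫ u, Φ u := by
    have h2 := MeasureTheory.Measure.integral_comp_mul_left (fun w => Φ (d + w)) c
    rw [MeasureTheory.integral_add_left_eq_self (μ := volume) Φ d] at h2
    exact h2
  have h3 : ∀ z : ℝ, Φ (d + c * z) = c⁻¹ • (gaussDensity z • F (d + c * z)) := by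
    intro z
    have hz : (d + c * z - d) / c = z := by field_simp; ring
    simp only [hΦ, hz, smul_smul]
  simp_rw [h3] at h1
  rw [integral_smul, abs_of_pos (inv_pos.mpr hc)] at h1
  have hcne : (c : ℝ)⁻¹ ≠ 0 := inv_ne_zero hc.ne'
  have := smul_right_injective ℂ hcne
  -- h1 : c⁻¹ • ∫ z, G z • F (d + c z) = c⁻¹ • ∫ Φ
  exact smul_right_injective ℂ hcne h1

/-- Convolution of Gaussian densities. -/
lemma gauss_conv {b c : ℝ} (hb : 0 ≤ b) (hc : 0 < c) (u : ℝ) :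
    ∫ y : ℝ, gaussDensity y * (c⁻¹ * gaussDensity ((u - b * y) / c))
      = (Real.sqrt (b ^ 2 + c ^ 2))⁻¹ * gaussDensity (u / Real.sqrt (b ^ 2 + c ^ 2)) := by
  set R : ℝ := b ^ 2 + c ^ 2 with hRdef
  have hR : 0 < R := by positivity
  have h2π : Real.sqrt (2 * π) * Real.sqrt (2 * π) = 2 * π :=
    Real.mul_self_sqrt (by positivity)
  have hsne : Real.sqrt (2 * π) ≠ 0 := by positivity
  have key : ∀ y : ℝ, gaussDensity y * (c⁻¹ * gaussDensity ((u - b * y) / c))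
      = ((2 * π)⁻¹ * c⁻¹ * Real.exp (-(u ^ 2 / (2 * R))))
          * Real.exp (-(R / (2 * c ^ 2) * (y - u * b / R) ^ 2)) := by
    intro y
    have hexp : Real.exp (-(y ^ 2) / 2) * Real.exp (-(((u - b * y) / c) ^ 2) / 2)
        = Real.exp (-(u ^ 2 / (2 * R))) * Real.exp (-(R / (2 * c ^ 2) * (y - u * b / R) ^ 2)) := by
      rw [← Real.exp_add, ← Real.exp_add]
      congr 1
      field_simp
      ring
    unfold gaussDensity
    calc (Real.sqrt (2 * π))⁻¹ * Real.exp (-(y ^ 2) / 2)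
          * (c⁻¹ * ((Real.sqrt (2 * π))⁻¹ * Real.exp (-(((u - b * y) / c) ^ 2) / 2)))
        = ((Real.sqrt (2 * π))⁻¹ * (Real.sqrt (2 * π))⁻¹) * c⁻¹
            * (Real.exp (-(y ^ 2) / 2) * Real.exp (-(((u - b * y) / c) ^ 2) / 2)) := by ring
      _ = (2 * π)⁻¹ * c⁻¹
            * (Real.exp (-(u ^ 2 / (2 * R))) * Real.exp (-(R / (2 * c ^ 2) * (y - u * b / R) ^ 2))) := by
          rw [← mul_inv, h2π, hexp]
      _ = _ := by ring
  simp_rw [key]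
  rw [integral_const_mul, integral_gauss_shift]
  have hRs : Real.sqrt R ≠ 0 := by positivity
  have h1 : Real.sqrt (π / (R / (2 * c ^ 2))) = Real.sqrt (2 * π) * c / Real.sqrt R := by
    rw [show (π / (R / (2 * c ^ 2)) : ℝ) = (2 * π) * (c ^ 2 / R) by field_simp]
    rw [Real.sqrt_mul (by positivity), Real.sqrt_div (by positivity : (0:ℝ) ≤ c ^ 2),
      Real.sqrt_sq hc.le, mul_div_assoc]
  have h2 : -((u / Real.sqrt R) ^ 2) / 2 = -(u ^ 2 / (2 * R)) := by
    rw [div_pow, Real.sq_sqrt hR.le]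
    rw [hRdef] at hR ⊢
    field_simp
  rw [h1]
  unfold gaussDensity
  rw [h2]
  rw [show ((2 * π)⁻¹ : ℝ) = (Real.sqrt (2 * π))⁻¹ * (Real.sqrt (2 * π))⁻¹ from by
    rw [← mul_inv, h2π]]
  have hcne := hc.ne'
  field_simp

lemma integrable_gauss_affine {c : ℝ} (hc : 0 < c) (d : ℝ) :
    Integrable (fun u : ℝ => gaussDensity ((u - d) / c)) :=
  (gaussDensity_integrable.comp_div hc.ne').comp_sub_right d

lemma integral_gauss_affine {c : ℝ} (hc : 0 < c) (d : ℝ) :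
    ∫ u : ℝ, gaussDensity ((u - d) / c) = c := by
  have h1 := MeasureTheory.integral_sub_right_eq_self (μ := volume)
    (fun u : ℝ => gaussDensity (u / c)) d
  rw [h1, MeasureTheory.Measure.integral_comp_div gaussDensity c, gaussDensity_integral,
    smul_eq_mul, mul_one, abs_of_pos hc]

lemma integrable_gauss_smul {φ : ℝ → ℂ} (hφ : AEStronglyMeasurable φ volume) {C : ℝ}
    (hC : ∀ x, ‖φ x‖ ≤ C) : Integrable (fun y => gaussDensity y • φ y) := by
  refine Integrable.mono' (gaussDensity_integrable.const_mul C)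
    (gaussDensity_continuous.aestronglyMeasurable.smul hφ) ?_
  filter_upwards with y
  rw [norm_smul, Real.norm_of_nonneg (gaussDensity_nonneg y)]
  exact (mul_le_mul_of_nonneg_left (hC y) (gaussDensity_nonneg y)).trans_eq (mul_comm _ _)

lemma key_exchange {b c : ℝ} (hb : 0 ≤ b) (hc : 0 < c) {g : ℝ → ℂ} (hg : Continuous g)
    {C : ℝ} (hC : ∀ x, ‖g x‖ ≤ C) :
    ∫ y : ℝ, gaussDensity y • ∫ z : ℝ, gaussDensity z • g (b * y + c * z)
      = ∫ w : ℝ, gaussDensity w • g (Real.sqrt (b ^ 2 + c ^ 2) * w) := by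
  have hC0 : 0 ≤ C := le_trans (norm_nonneg _) (hC 0)
  set r : ℝ := Real.sqrt (b ^ 2 + c ^ 2) with hrdef
  have hr : 0 < r := Real.sqrt_pos.mpr (by positivity)
  set Φ : ℝ → ℝ → ℂ :=
    fun y u => (gaussDensity y * (c⁻¹ * gaussDensity ((u - b * y) / c))) • g u with hΦdef
  have hΦcont : Continuous (Function.uncurry Φ) := by
    refine Continuous.smul (f := fun p : ℝ × ℝ => gaussDensity p.1 * (c⁻¹ * gaussDensity ((p.2 - b * p.1) / c))) (g := fun p : ℝ × ℝ => g p.2) ?_ ?_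
    · exact (gaussDensity_continuous.comp continuous_fst).mul
        (continuous_const.mul (gaussDensity_continuous.comp
          ((continuous_snd.sub (continuous_const.mul continuous_fst)).div_const c)))
    · exact hg.comp continuous_snd
  have hΦnorm : ∀ y u : ℝ, ‖Φ y u‖
      ≤ (gaussDensity y * c⁻¹ * C) * gaussDensity ((u - b * y) / c) := by
    intro y u
    rw [hΦdef]
    simp only
    have hnn : 0 ≤ gaussDensity y * (c⁻¹ * gaussDensity ((u - b * y) / c)) :=
      mul_nonneg (gaussDensity_nonneg y)
        (mul_nonneg (inv_nonneg.mpr hc.le) (gaussDensity_nonneg _))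
    rw [norm_smul, Real.norm_of_nonneg hnn]
    calc gaussDensity y * (c⁻¹ * gaussDensity ((u - b * y) / c)) * ‖g u‖
        ≤ gaussDensity y * (c⁻¹ * gaussDensity ((u - b * y) / c)) * C := by
          exact mul_le_mul_of_nonneg_left (hC u) hnn
      _ = (gaussDensity y * c⁻¹ * C) * gaussDensity ((u - b * y) / c) := by ring
  have hΦint : Integrable (Function.uncurry Φ) ((volume : Measure ℝ).prod volume) := by
    rw [MeasureTheory.integrable_prod_iff hΦcont.aestronglyMeasurable]
    constructor
    · filter_upwards with y
      refine Integrable.mono' ((integrable_gauss_affine hc (b * y)).const_mul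
        (gaussDensity y * c⁻¹ * C)) ?_ ?_
      · exact (hΦcont.comp (Continuous.prodMk_right y)).aestronglyMeasurable
      · filter_upwards with u
        exact hΦnorm y u
    · refine Integrable.mono' (gaussDensity_integrable.const_mul (C * c * c⁻¹)) ?_ ?_
      · exact (hΦcont.aestronglyMeasurable.norm.integral_prod_right')
      · filter_upwards with y
        rw [Real.norm_of_nonneg (integral_nonneg fun u => norm_nonneg _)]
        calc ∫ u, ‖Φ y u‖
            ≤ ∫ u, (gaussDensity y * c⁻¹ * C) * gaussDensity ((u - b * y) / c) := by
              apply integral_mono_of_nonneg (Filter.Eventually.of_forall fun u => norm_nonneg _)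
                ((integrable_gauss_affine hc (b * y)).const_mul _)
                (Filter.Eventually.of_forall fun u => hΦnorm y u)
          _ = (gaussDensity y * c⁻¹ * C) * c := by
              rw [integral_const_mul, integral_gauss_affine hc]
          _ = C * c * c⁻¹ * gaussDensity y := by ring
  -- Step 1: rewrite inner integral via substitution
  have step1 : ∀ y : ℝ, gaussDensity y • (∫ z : ℝ, gaussDensity z • g (b * y + c * z))
      = ∫ u : ℝ, Φ y u := by
    intro y
    rw [integral_gauss_sub hc (b * y) g, ← integral_smul]
    congr 1; funext u
    rw [hΦdef]; simp only [smul_smul]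
  simp_rw [step1]
  -- Fubini
  rw [MeasureTheory.integral_integral_swap hΦint]
  -- compute the inner integral over y
  have step3 : ∀ u : ℝ, (∫ y : ℝ, Φ y u) = (r⁻¹ * gaussDensity (u / r)) • g u := by
    intro u
    rw [hΦdef]
    simp only
    rw [integral_smul_const, gauss_conv hb hc u]
  simp_rw [step3]
  -- undo the substitution with scale r
  have := integral_gauss_sub hr 0 g
  simp only [zero_add, sub_zero] at this
  rw [← this]

lemma gauss_reflect (c u : ℝ) (f : ℝ → ℂ) :
    ∫ z : ℝ, gaussDensity z • f ((|u| + c * z) ^ 2)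
      = ∫ z : ℝ, gaussDensity z • f ((u + c * z) ^ 2) := by
  rcases abs_cases u with ⟨h, _⟩ | ⟨h, _⟩
  · rw [h]
  · rw [h]
    have hneg := MeasureTheory.integral_neg_eq_self (μ := volume)
      (fun z : ℝ => gaussDensity z • f ((u + c * z) ^ 2))
    rw [← hneg]
    congr 1; funext z
    rw [gaussDensity_neg]
    congr 2
    ring

/-- the Gaussian family
`P_t f(x) = ∫ f((√x + σ√t y)²) (2π)^{-1/2} e^{-y²/2} dy`
satisfies the semigroup property `P_{t+s} = P_t P_s` on bounded continuous
functions. -/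
theorem cirSemigroup_semigroup_property
    (σ : ℝ) (hσ : 0 < σ) (f : ℝ → ℂ)
    (hfc : Continuous f) (hfb : ∃ Cb : ℝ, ∀ x : ℝ, ‖f x‖ ≤ Cb) :
    ∀ t ≥ (0 : ℝ), ∀ s ≥ (0 : ℝ), ∀ x ≥ (0 : ℝ),
      cirSemigroup σ (t + s) f x
        = cirSemigroup σ t (fun z => cirSemigroup σ s f z) x := by
  obtain ⟨C, hC⟩ := hfb
  intro t ht s hs x hx
  rcases eq_or_lt_of_le ht with rfl | ht'
  · -- t = 0
    rw [zero_add]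
    unfold cirSemigroup
    simp only [Real.sqrt_zero, mul_zero, zero_mul, add_zero,
      Real.sq_sqrt hx]
    rw [integral_smul_const, gaussDensity_integral, one_smul]
  rcases eq_or_lt_of_le hs with rfl | hs'
  · -- s = 0
    rw [add_zero]
    unfold cirSemigroup
    congr 1; funext y
    congr 1
    simp only [Real.sqrt_zero, mul_zero, zero_mul, add_zero,
      Real.sq_sqrt (Real.sqrt_nonneg _), Real.sq_sqrt (sq_nonneg _)]
    rw [integral_smul_const, gaussDensity_integral, one_smul]
  -- main case : t, s > 0
  have hb : 0 < σ * Real.sqrt t := mul_pos hσ (Real.sqrt_pos.mpr ht')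
  have hc : 0 < σ * Real.sqrt s := mul_pos hσ (Real.sqrt_pos.mpr hs')
  have hr : Real.sqrt ((σ * Real.sqrt t) ^ 2 + (σ * Real.sqrt s) ^ 2)
      = σ * Real.sqrt (t + s) := by
    rw [show (σ * Real.sqrt t) ^ 2 + (σ * Real.sqrt s) ^ 2 = (σ * Real.sqrt (t + s)) ^ 2 by
      rw [mul_pow, mul_pow, mul_pow, Real.sq_sqrt ht, Real.sq_sqrt hs,
        Real.sq_sqrt (by linarith : (0:ℝ) ≤ t + s)]
      ring]
    exact Real.sqrt_sq (by positivity)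
  have hgc : Continuous (fun w : ℝ => f ((Real.sqrt x + w) ^ 2)) := hfc.comp (by continuity)
  have hgC : ∀ w : ℝ, ‖f ((Real.sqrt x + w) ^ 2)‖ ≤ C := fun w => hC _
  have hkey := key_exchange hb.le hc (g := fun w : ℝ => f ((Real.sqrt x + w) ^ 2)) hgc hgC
  have hrhs : cirSemigroup σ t (fun z => cirSemigroup σ s f z) x
      = ∫ y : ℝ, gaussDensity y • ∫ z : ℝ, gaussDensity z •
          f ((Real.sqrt x + (σ * Real.sqrt t * y + σ * Real.sqrt s * z)) ^ 2) := by
    unfold cirSemigroup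
    congr 1; funext y
    beta_reduce
    congr 1
    rw [Real.sqrt_sq_eq_abs,
      gauss_reflect (σ * Real.sqrt s) (Real.sqrt x + σ * Real.sqrt t * y) f]
    congr 1; funext z
    congr 2
    ring
  rw [hrhs, hkey, hr]
  unfold cirSemigroup
  rfl
end

section
/- Let D ⊆ ℝ^N be the closure of a C¹ domain with outer unit normal n, and let V : D → ℝ^N be a C¹ vector field with bounded derivative satisfying V(x)·n(x) ≤ 0 for all x ∈ ∂D. Then for every x ∈ D the solution of the ODE x'(t) = V(x(t)), x(0) = x, remains in D for all t ≥ 0, i.e., the flow Fl_t maps D into D for all t ≥ 0. -/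
open Filter Topology Set Metric

/-- Local projection onto `{g ≤ 0}` near a point where the gradient is nonzero. -/
lemma aux_proj {E : Type*} [NormedAddCommGroup E] [InnerProductSpace ℝ E] [CompleteSpace E]
    (g : E → ℝ) (hg : ContDiff ℝ 1 g) (y : E) (hG : gradient g y ≠ 0) :
    ∃ r > 0, ∀ z : E, ‖z - y‖ ≤ r → 0 ≤ g z → g z ≤ r * ‖gradient g y‖ / 4 →
      ∃ w, g w ≤ 0 ∧ ‖z - w‖ ≤ 2 / ‖gradient g y‖ * g z := by
  set G := gradient g y with hGdef
  have hGn : 0 < ‖G‖ := norm_pos_iff.2 hG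
  set u : E := ‖G‖⁻¹ • G with hu
  have hun : ‖u‖ = 1 := by
    rw [hu, norm_smul, norm_inv, norm_norm, inv_mul_cancel₀ hGn.ne']
  have hdiff : Differentiable ℝ g := hg.differentiable one_ne_zero
  have hfy : fderiv ℝ g y u = ‖G‖ := by
    have h1 : (inner ℝ G u : ℝ) = fderiv ℝ g y u := by
      rw [hGdef]; exact InnerProductSpace.toDual_symm_apply
    rw [← h1, hu, real_inner_smul_right, real_inner_self_eq_norm_sq]
    field_simp [sq]
  have hcont : Continuous fun p => fderiv ℝ g p u :=
    (hg.continuous_fderiv one_ne_zero).clm_apply continuous_const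
  have hev : ∀ᶠ p in 𝓝 y, ‖G‖ / 2 < fderiv ℝ g p u := by
    have : Tendsto (fun p => fderiv ℝ g p u) (𝓝 y) (𝓝 (fderiv ℝ g y u)) :=
      hcont.continuousAt
    apply this.eventually (Ioi_mem_nhds ?_)
    rw [hfy]; linarith
  obtain ⟨ρ, hρ, hball⟩ := Metric.eventually_nhds_iff.1 hev
  refine ⟨ρ / 2, by linarith, fun z hz hz0 hzsmall => ?_⟩
  set s₀ : ℝ := 2 / ‖G‖ * g z with hs₀
  have hs₀0 : 0 ≤ s₀ := by positivity
  have hs₀le : s₀ ≤ ρ / 4 := by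
    rw [hs₀]
    rw [div_mul_eq_mul_div, div_le_div_iff₀ hGn (by norm_num : (0:ℝ) < 4)]
    calc 2 * g z * 4 = 8 * g z := by ring
      _ ≤ 8 * (ρ / 2 * ‖G‖ / 4) := by nlinarith
      _ = ρ * ‖G‖ := by ring
  set φ : ℝ → ℝ := fun s => g (z - s • u) with hφ
  have hφd : ∀ s : ℝ, HasDerivAt φ (-(fderiv ℝ g (z - s • u) u)) s := by
    intro s
    have h1 : HasDerivAt (fun s : ℝ => z - s • u) (-u) s := by
      simpa using ((hasDerivAt_id s).smul_const u).const_sub z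
    have h2 := (hdiff (z - s • u)).hasFDerivAt.comp_hasDerivAt s h1
    simpa [map_neg, Function.comp_def] using h2
  have hkey : φ s₀ - φ 0 ≤ -(‖G‖ / 2) * (s₀ - 0) := by
    apply Convex.image_sub_le_mul_sub_of_deriv_le (convex_Icc 0 s₀)
    · exact fun s _ => (hφd s).continuousAt.continuousWithinAt
    · exact fun s _ => (hφd s).differentiableAt.differentiableWithinAt
    · intro s hs
      rw [interior_Icc] at hs
      rw [(hφd s).deriv]
      have hmem : dist (z - s • u) y < ρ := by
        rw [dist_eq_norm]
        calc ‖z - s • u - y‖ ≤ ‖z - y‖ + ‖s • u‖ := by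
              have : z - s • u - y = (z - y) - s • u := by abel
              rw [this]; exact norm_sub_le _ _
          _ ≤ ρ / 2 + s := by
              rw [norm_smul, hun, mul_one, Real.norm_eq_abs,
                abs_of_nonneg hs.1.le]
              linarith [hz]
          _ < ρ := by
              have := hs.2
              linarith [hs₀le]
      have := hball hmem
      linarith
    · exact ⟨le_rfl, hs₀0⟩
    · exact ⟨hs₀0, le_rfl⟩
    · exact hs₀0
  refine ⟨z - s₀ • u, ?_, ?_⟩
  · have hφ0 : φ 0 = g z := by simp [hφ]
    have hcalc : -(‖G‖ / 2) * s₀ = -(g z) := by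
      rw [hs₀]; field_simp
    rw [sub_zero] at hkey
    rw [hφ0, hcalc] at hkey
    have : φ s₀ ≤ 0 := by linarith
    simpa [hφ] using this
  · have : z - (z - s₀ • u) = s₀ • u := by abel
    rw [this, norm_smul, hun, mul_one, Real.norm_eq_abs, abs_of_nonneg hs₀0]

/-- Nagumo-type forward invariance: let `D` be the closure of a
`C¹` domain `Ω = {g < 0}` with outer unit normal `n = ∇g/‖∇g‖` on `∂Ω`, and let
`V` be a `C¹` vector field with bounded derivative satisfying `V·n ≤ 0` on the
boundary. Then every solution of `x' = V(x)` starting in `D` stays in `D` for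
all `t ≥ 0`. -/
theorem forward_invariance_inward_vector_field
    {N : ℕ}
    (g : EuclideanSpace ℝ (Fin N) → ℝ) (hg : ContDiff ℝ 1 g)
    (Ω : Set (EuclideanSpace ℝ (Fin N))) (hΩ : Ω = {x | g x < 0})
    (hfront : frontier Ω = {x | g x = 0})
    (hgrad : ∀ x ∈ frontier Ω, gradient g x ≠ 0)
    (n : EuclideanSpace ℝ (Fin N) → EuclideanSpace ℝ (Fin N))
    (hn : ∀ x ∈ frontier Ω, n x = ‖gradient g x‖⁻¹ • gradient g x)
    (D : Set (EuclideanSpace ℝ (Fin N))) (hD : D = closure Ω)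
    (V : EuclideanSpace ℝ (Fin N) → EuclideanSpace ℝ (Fin N))
    (hV1 : ContDiff ℝ 1 V) (L : ℝ) (hVderiv : ∀ x, ‖fderiv ℝ V x‖ ≤ L)
    (hVn : ∀ x ∈ frontier Ω, inner ℝ (V x) (n x) ≤ (0 : ℝ)) :
    ∀ x ∈ D, ∀ c : ℝ → EuclideanSpace ℝ (Fin N),
      c 0 = x → (∀ t ≥ (0 : ℝ), HasDerivAt c (V (c t)) t) →
      ∀ t ≥ (0 : ℝ), c t ∈ D := by
  intro x hx c hc0 hc' t ht
  have hgc : Continuous g := hg.continuous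
  have hdiffg : Differentiable ℝ g := hg.differentiable one_ne_zero
  have hDeq : D = {z | g z ≤ 0} := by
    rw [hD]
    apply Set.Subset.antisymm
    · refine closure_minimal ?_ (isClosed_le hgc continuous_const)
      rw [hΩ]
      intro z hz
      show g z ≤ 0
      exact le_of_lt hz
    · intro z hz
      rcases lt_or_eq_of_le (Set.mem_setOf.1 hz) with h | h
      · exact subset_closure (by rw [hΩ]; exact h)
      · have hzf : z ∈ frontier Ω := by rw [hfront]; exact Set.mem_setOf.2 h
        exact frontier_subset_closure hzf
  rw [hDeq] at hx ⊢
  set S : Set (EuclideanSpace ℝ (Fin N)) := {z | g z ≤ 0} with hS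
  have hSc : IsClosed S := isClosed_le hgc continuous_const
  have hSne : S.Nonempty := ⟨x, hx⟩
  have hL0 : 0 ≤ L := le_trans (norm_nonneg _) (hVderiv x)
  have hLip : ∀ a b, ‖V a - V b‖ ≤ L * ‖a - b‖ := fun a b =>
    Convex.norm_image_sub_le_of_norm_fderiv_le
      (fun p _ => (hV1.differentiable one_ne_zero p)) (fun p _ => hVderiv p)
      convex_univ (Set.mem_univ b) (Set.mem_univ a)
  -- subtangency of V to S at points of S
  have subtang : ∀ y, g y ≤ 0 → ∀ ε : ℝ, 0 < ε → ∀ᶠ h in 𝓝[>] (0:ℝ),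
      ∃ w, g w ≤ 0 ∧ ‖y + h • V y - w‖ ≤ ε * h := by
    intro y hy ε hε
    rcases lt_or_eq_of_le hy with hlt | heq
    · -- interior case
      have hcnt : ContinuousAt (fun h : ℝ => g (y + h • V y)) 0 :=
        (hgc.comp (continuous_const.add (continuous_id.smul continuous_const))).continuousAt
      have hev : ∀ᶠ h in 𝓝 (0:ℝ), g (y + h • V y) < 0 :=
        hcnt (Iio_mem_nhds (show g (y + (0:ℝ) • V y) < 0 by simpa using hlt))
      filter_upwards [eventually_nhdsWithin_of_eventually_nhds hev, self_mem_nhdsWithin]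
        with h hg0 hh
      refine ⟨y + h • V y, le_of_lt hg0, ?_⟩
      rw [sub_self, norm_zero]
      exact mul_nonneg hε.le (le_of_lt hh)
    · -- boundary case
      have hyf : y ∈ frontier Ω := by rw [hfront]; exact Set.mem_setOf.2 heq
      have hGne := hgrad y hyf
      have hGn : 0 < ‖gradient g y‖ := norm_pos_iff.2 hGne
      have hGV : fderiv ℝ g y (V y) ≤ 0 := by
        have h1 := hVn y hyf
        rw [hn y hyf, real_inner_smul_right] at h1
        have h2 : (inner ℝ (V y) (gradient g y) : ℝ) ≤ 0 := by
          by_contra hcon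
          push_neg at hcon
          nlinarith [inv_pos.2 hGn]
        rw [real_inner_comm] at h2
        have h3 : (inner ℝ (gradient g y) (V y) : ℝ) = fderiv ℝ g y (V y) :=
          InnerProductSpace.toDual_symm_apply
        rw [← h3]; exact h2
      obtain ⟨r, hr, hproj⟩ := aux_proj g hg y hGne
      have hψ : HasDerivAt (fun h : ℝ => g (y + h • V y)) (fderiv ℝ g y (V y)) 0 := by
        have h1 : HasDerivAt (fun h : ℝ => y + h • V y) (V y) 0 := by
          simpa using ((hasDerivAt_id (0:ℝ)).smul_const (V y)).const_add y
        have h2 := (hdiffg (y + (0:ℝ) • V y)).hasFDerivAt.comp_hasDerivAt 0 h1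
        simpa [Function.comp_def] using h2
      set ε' : ℝ := ε * ‖gradient g y‖ / 2 with hε'
      have hε'0 : 0 < ε' := by positivity
      have hslope : ∀ᶠ h in 𝓝[>] (0:ℝ), g (y + h • V y) ≤ ε' * h := by
        have h1 : Tendsto (slope (fun h : ℝ => g (y + h • V y)) 0) (𝓝[≠] 0)
            (𝓝 (fderiv ℝ g y (V y))) := hasDerivAt_iff_tendsto_slope.1 hψ
        have h2 : Tendsto (slope (fun h : ℝ => g (y + h • V y)) 0) (𝓝[>] 0)
            (𝓝 (fderiv ℝ g y (V y))) :=
          h1.mono_left (nhdsWithin_mono 0 fun z hz => ne_of_gt hz)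
        have h3 : ∀ᶠ h in 𝓝[>] (0:ℝ),
            slope (fun h : ℝ => g (y + h • V y)) 0 h < ε' :=
          h2 (Iio_mem_nhds (lt_of_le_of_lt hGV hε'0))
        filter_upwards [h3, self_mem_nhdsWithin] with h hs hh
        have hψ0 : g (y + (0:ℝ) • V y) = 0 := by simpa using heq
        rw [slope_def_field, hψ0, sub_zero, sub_zero, div_lt_iff₀ hh] at hs
        exact hs.le
      have hsm1 : ∀ᶠ h in 𝓝[>] (0:ℝ), ‖h • V y‖ ≤ r := by
        have hco : Continuous fun h : ℝ => ‖h • V y‖ :=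
          (continuous_id.smul continuous_const).norm
        have ht0 : Tendsto (fun h : ℝ => ‖h • V y‖) (𝓝[>] (0:ℝ)) (𝓝 0) := by
          simpa using (hco.tendsto 0).mono_left nhdsWithin_le_nhds
        filter_upwards [ht0 (Iio_mem_nhds hr)] with h hh using le_of_lt hh
      have hr4 : 0 < r * ‖gradient g y‖ / 4 := by positivity
      have hsm2 : ∀ᶠ h in 𝓝[>] (0:ℝ), ε' * h ≤ r * ‖gradient g y‖ / 4 := by
        have hco : Continuous fun h : ℝ => ε' * h := continuous_const.mul continuous_id
        have ht0 : Tendsto (fun h : ℝ => ε' * h) (𝓝[>] (0:ℝ)) (𝓝 0) := by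
          simpa using (hco.tendsto 0).mono_left nhdsWithin_le_nhds
        filter_upwards [ht0 (Iio_mem_nhds hr4)] with h hh using le_of_lt hh
      filter_upwards [hslope, hsm1, hsm2, self_mem_nhdsWithin] with h h1 h2 h3 hh
      set z := y + h • V y with hzdef
      by_cases hgz : g z ≤ 0
      · refine ⟨z, hgz, ?_⟩
        rw [sub_self, norm_zero]
        exact mul_nonneg hε.le hh.le
      · push_neg at hgz
        have hzy : ‖z - y‖ ≤ r := by
          rw [hzdef, add_sub_cancel_left]; exact h2
        obtain ⟨w, hw, hwb⟩ := hproj z hzy hgz.le (le_trans h1 h3)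
        refine ⟨w, hw, le_trans hwb ?_⟩
        calc 2 / ‖gradient g y‖ * g z ≤ 2 / ‖gradient g y‖ * (ε' * h) := by
              apply mul_le_mul_of_nonneg_left h1 (by positivity)
          _ = ε * h := by rw [hε']; field_simp
  -- Grönwall argument for f τ = infDist (c τ) S
  set f : ℝ → ℝ := fun τ => infDist (c τ) S with hfdef
  have hfc : ContinuousOn f (Icc 0 t) := fun τ hτ =>
    ((continuous_infDist_pt S).continuousAt.comp (hc' τ hτ.1).continuousAt).continuousWithinAt
  have hbound : ∀ τ ∈ Ico (0:ℝ) t, L * f τ ≤ L * f τ + 0 := by intro τ _; simp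
  have ha : f 0 ≤ 0 := by
    show infDist (c 0) S ≤ 0
    rw [hc0]
    exact le_of_eq (infDist_zero_of_mem hx)
  have hf' : ∀ τ ∈ Ico (0:ℝ) t, ∀ ρ, L * f τ < ρ →
      ∃ᶠ z in 𝓝[>] τ, (z - τ)⁻¹ * (f z - f τ) < ρ := by
    intro τ hτ ρ hρ
    obtain ⟨y, hyS, hyd⟩ := hSc.exists_infDist_eq_dist hSne (c τ)
    set ε₀ : ℝ := (ρ - L * f τ) / 2 with hε₀
    have hε₀0 : 0 < ε₀ := by rw [hε₀]; linarith
    have h1 : ∀ᶠ z in 𝓝[>] τ, ‖c z - c τ - (z - τ) • V (c τ)‖ ≤ ε₀ / 2 * (z - τ) := by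
      have hlo := (hasDerivAt_iff_isLittleO.1 (hc' τ hτ.1)).def
        (show (0:ℝ) < ε₀ / 2 by positivity)
      filter_upwards [eventually_nhdsWithin_of_eventually_nhds hlo, self_mem_nhdsWithin]
        with z hz hzτ
      rwa [Real.norm_eq_abs, abs_of_pos (sub_pos.2 hzτ)] at hz
    have hmap : Tendsto (fun z : ℝ => z - τ) (𝓝[>] τ) (𝓝[>] 0) := by
      apply tendsto_nhdsWithin_of_tendsto_nhds_of_eventually_within
      · simpa using ((continuous_sub_right τ).tendsto τ).mono_left nhdsWithin_le_nhds
      · filter_upwards [self_mem_nhdsWithin] with z hz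
        exact sub_pos.2 (Set.mem_Ioi.1 hz)
    have h2 := hmap.eventually (subtang y hyS (ε₀ / 2) (by positivity))
    apply Filter.Eventually.frequently
    filter_upwards [h1, h2, self_mem_nhdsWithin] with z hz1 hz2 hzτ
    obtain ⟨w, hwS, hwb⟩ := hz2
    have hh : 0 < z - τ := sub_pos.2 hzτ
    have hfz : f z ≤ ‖c z - w‖ := by
      show infDist (c z) S ≤ _
      have h := infDist_le_dist_of_mem (x := c z) (show w ∈ S from hwS)
      rwa [dist_eq_norm] at h
    have hB1 : ‖c τ - y‖ = f τ := by
      show _ = infDist (c τ) S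
      rw [hyd, dist_eq_norm]
    have hdecomp : c z - w = (c z - c τ - (z - τ) • V (c τ))
        + ((c τ - y) + (z - τ) • (V (c τ) - V y)) + (y + (z - τ) • V y - w) := by
      rw [smul_sub]; abel
    have hnorm : ‖c z - w‖ ≤ ε₀ / 2 * (z - τ) + (f τ + (z - τ) * (L * f τ))
        + ε₀ / 2 * (z - τ) := by
      rw [hdecomp]
      refine le_trans (norm_add₃_le) ?_
      have hB : ‖(c τ - y) + (z - τ) • (V (c τ) - V y)‖ ≤ f τ + (z - τ) * (L * f τ) := by
        refine le_trans (norm_add_le _ _) ?_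
        have hB2 : ‖(z - τ) • (V (c τ) - V y)‖ ≤ (z - τ) * (L * f τ) := by
          rw [norm_smul, Real.norm_eq_abs, abs_of_pos hh]
          refine mul_le_mul_of_nonneg_left ?_ hh.le
          calc ‖V (c τ) - V y‖ ≤ L * ‖c τ - y‖ := hLip _ _
            _ = L * f τ := by rw [hB1]
        rw [hB1]
        exact add_le_add le_rfl hB2
      exact add_le_add (add_le_add hz1 hB) hwb
    have hkey : f z - f τ ≤ (L * f τ + ε₀) * (z - τ) := by nlinarith [hfz, hnorm]
    have hρ2 : L * f τ + ε₀ < ρ := by rw [hε₀]; linarith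
    rw [inv_mul_lt_iff₀ hh]
    calc f z - f τ ≤ (L * f τ + ε₀) * (z - τ) := hkey
      _ < ρ * (z - τ) := mul_lt_mul_of_pos_right hρ2 hh
      _ = (z - τ) * ρ := mul_comm _ _
  have key := le_gronwallBound_of_liminf_deriv_right_le (f := f) (f' := fun τ => L * f τ)
      hfc hf' ha hbound t ⟨ht, le_rfl⟩
  rw [sub_zero, gronwallBound_ε0_δ0] at key
  have hft : f t = 0 := le_antisymm key infDist_nonneg
  exact (hSc.mem_iff_infDist_zero hSne).2 hft
end
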